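/- Let $N>1$, $p\in[1,\infty]$, and let the neighborhood in the Schelling model on $\mathbb Z^N$ be $\mathfrak N(i)=\{j:\|j-i\|_p<w\}\cup\{i\}$ (the lattice $\ell^p$-ball of radius $w$). Then there exists a connected stable shape $A\subset\mathbb Z^N$ of diameter at most $C_N w^{N+1}$, where $C_N$ depends only on $N$. Specifically, starting from the cube $A_0=\{i:\|i\|_\infty\le r\}$ with $r=2^{2N}w^{N+1}$ and repeatedly removing unsatisfied nodes one at a time, the process terminates at a nonempty stable set. -/

import Mathlib

open Set

/-- The lattice `ℓ^p`-ball neighborhood of radius `w` around `i ∈ ℤ^N` (for `1 ≤ p < ∞`),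
together with `i` itself. -/
def nbhdLp (N : ℕ) (p : ℝ) (w : ℕ) (i : Fin N → ℤ) : Set (Fin N → ℤ) :=
  insert i {j | (∑ d, |(j d : ℝ) - (i d : ℝ)| ^ p) < (w : ℝ) ^ p}

/-- The lattice `ℓ^∞`-ball neighborhood of radius `w` around `i ∈ ℤ^N`, together with `i`. -/
def nbhdLinf (N : ℕ) (w : ℕ) (i : Fin N → ℤ) : Set (Fin N → ℤ) :=
  insert i {j | ∀ d, |j d - i d| < (w : ℤ)}

/-- `A` is stable: with opinion 1 on `A` and opinion 2 elsewhere, every node weakly agrees with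
the most common opinion in its neighborhood. -/
def IsStableConf (N : ℕ) (𝔑 : (Fin N → ℤ) → Set (Fin N → ℤ))
    (A : Set (Fin N → ℤ)) : Prop :=
  ∀ i, {j ∈ 𝔑 i | ¬ (j ∈ A ↔ i ∈ A)}.ncard ≤ {j ∈ 𝔑 i | j ∈ A ↔ i ∈ A}.ncard

/-- `A ⊆ ℤ^N` is connected: any two points are joined by an `ℓ¹`-nearest-neighbor path in `A`. -/
def IsConn (N : ℕ) (A : Set (Fin N → ℤ)) : Prop :=
  ∀ i ∈ A, ∀ j ∈ A, ∃ n : ℕ, ∃ f : ℕ → Fin N → ℤ,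
    f 0 = i ∧ f n = j ∧ (∀ k ≤ n, f k ∈ A) ∧
    ∀ k < n, (∑ d, |f (k + 1) d - f k d|) ≤ 1

namespace Schelling

abbrev V (N : ℕ) := Fin N → ℤ
variable {N : ℕ}
noncomputable def box (N m : ℕ) : Finset (V N) := Fintype.piFinset fun _ => Finset.Icc (-(m:ℤ)) m
lemma mem_box {m : ℕ} {x : V N} : x ∈ box N m ↔ ∀ d, |x d| ≤ (m:ℤ) := by
  simp [box, Fintype.mem_piFinset, abs_le]
lemma card_box (m : ℕ) : (box N m).card = (2*m+1)^N := by
  simp [box, Fintype.card_piFinset]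
  congr 1
  omega
def IsDS (A : Finset (V N)) : Prop := ∀ a ∈ A, ∀ t : V N, (∀ d, |t d| ≤ |a d|) → t ∈ A
lemma box_isDS (m : ℕ) : IsDS (box N m) := by
  intro a ha t ht
  rw [mem_box] at *
  exact fun d => le_trans (ht d) (ha d)
def cnt (S A : Finset (V N)) (i : V N) : ℕ := (A.filter fun j => j - i ∈ S).card
def ener (S A : Finset (V N)) : ℕ := ∑ i ∈ A, cnt S A i
def phi (S A : Finset (V N)) : ℕ := S.card * A.card - ener S A
def StableF (S B : Finset (V N)) : Prop :=
  (∀ i ∈ B, S.card ≤ 2 * cnt S B i) ∧ (∀ i : V N, i ∉ B → 2 * cnt S B i ≤ S.card)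

variable {S A B U W : Finset (V N)}

lemma neg_mem (hS : ∀ s ∈ S, ∀ t : V N, (∀ d, |t d| ≤ |s d|) → t ∈ S)
    {s : V N} (hs : s ∈ S) : -s ∈ S := by
  apply hS s hs
  intro d
  simp

lemma cnt_le (S A : Finset (V N)) (i : V N) : cnt S A i ≤ S.card := by
  apply Finset.card_le_card_of_injOn (fun j => j - i)
  · intro j hj; exact (Finset.mem_filter.mp hj).2
  · intro a _ b _ h; simpa using h

lemma ener_le (S A : Finset (V N)) : ener S A ≤ S.card * A.card := by
  calc ener S A ≤ ∑ _i ∈ A, S.card := Finset.sum_le_sum (fun i _ => cnt_le S A i)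
  _ = S.card * A.card := by rw [Finset.sum_const, smul_eq_mul, mul_comm]

lemma phi_add (S A : Finset (V N)) : ener S A + phi S A = S.card * A.card :=
  Nat.add_sub_cancel' (ener_le S A)

lemma cnt_step (hS : IsDS S) (hA : IsDS A) (x : V N) (d : Fin N) (hx : 1 ≤ x d) :
    cnt S A x ≤ cnt S A (Function.update x d (x d - 1)) := by
  classical
  set x' := Function.update x d (x d - 1) with hx'
  have hx'd : x' d = x d - 1 := by simp [hx']
  have hx'other : ∀ d', d' ≠ d → x' d' = x d' := by
    intro d' hd'; simp [hx', Function.update_of_ne hd']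
  set σ : V N → V N := fun j => Function.update j d (2 * x d - 1 - j d) with hσ
  have hσd : ∀ j, σ j d = 2 * x d - 1 - j d := by intro j; simp [hσ]
  have hσother : ∀ j d', d' ≠ d → σ j d' = j d' := by
    intro j d' hd'; simp [hσ, Function.update_of_ne hd']
  -- key: if j - x ∈ S but j - x' ∉ S then x d ≤ j d
  have hkey : ∀ j : V N, j - x ∈ S → j - x' ∉ S → x d ≤ j d := by
    intro j hj hj'
    by_contra h
    push_neg at h
    apply hj'
    apply hS _ hj
    intro d'
    by_cases hd : d' = d
    · subst hd
      simp only [Pi.sub_apply, hx'd]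
      have : j d' - (x d' - 1) = (j d' - x d') + 1 := by ring
      rw [this]
      have h1 : j d' - x d' ≤ -1 := by omega
      rw [abs_of_nonpos (by omega), abs_of_nonpos (by omega)]
      omega
    · simp [Pi.sub_apply, hx'other d' hd]
  -- σ j - x' ∈ S when j - x ∈ S
  have hσS : ∀ j : V N, j - x ∈ S → σ j - x' ∈ S := by
    intro j hj
    apply hS _ hj
    intro d'
    by_cases hd : d' = d
    · subst hd
      simp only [Pi.sub_apply, hσd, hx'd]
      have : 2 * x d' - 1 - j d' - (x d' - 1) = -(j d' - x d') := by ring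
      rw [this, abs_neg]
    · simp [Pi.sub_apply, hσother j d' hd, hx'other d' hd]
  -- σ j - x ∉ S when j - x' ∉ S
  have hσnS : ∀ j : V N, j - x' ∉ S → σ j - x ∉ S := by
    intro j hj hmem
    apply hj
    apply hS _ hmem
    intro d'
    by_cases hd : d' = d
    · subst hd
      simp only [Pi.sub_apply, hσd, hx'd]
      have : 2 * x d' - 1 - j d' - x d' = -(j d' - (x d' - 1)) := by ring
      rw [this, abs_neg]
    · simp [Pi.sub_apply, hσother j d' hd, hx'other d' hd]
  apply Finset.card_le_card_of_injOn (fun j => if j - x' ∈ S then j else σ j)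
  · intro j hj
    rw [Finset.mem_coe, Finset.mem_filter] at hj
    obtain ⟨hjA, hjS⟩ := hj
    by_cases hc : j - x' ∈ S
    · simp only [if_pos hc]
      exact Finset.mem_filter.mpr ⟨hjA, hc⟩
    · simp only [if_neg hc]
      have hjd : x d ≤ j d := hkey j hjS hc
      refine Finset.mem_filter.mpr ⟨?_, hσS j hjS⟩
      apply hA j hjA
      intro d'
      by_cases hd : d' = d
      · subst hd
        rw [hσd]
        rw [abs_of_nonneg (by omega : (0:ℤ) ≤ j d')]
        rw [abs_le]
        omega
      · rw [hσother j d' hd]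
  · intro a ha b hb hab
    rw [Finset.coe_filter, Set.mem_setOf_eq] at ha hb
    simp only at hab
    by_cases hca : a - x' ∈ S <;> by_cases hcb : b - x' ∈ S
    · rwa [if_pos hca, if_pos hcb] at hab
    · rw [if_pos hca, if_neg hcb] at hab
      exact absurd (hab ▸ ha.2) (hσnS b hcb)
    · rw [if_neg hca, if_pos hcb] at hab
      exact absurd (hab ▸ hb.2) (hσnS a hca)
    · rw [if_neg hca, if_neg hcb] at hab
      funext d'
      by_cases hd : d' = d
      · subst hd
        have := congrFun hab d'
        rw [hσd, hσd] at this
        omega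
      · have := congrFun hab d'
        rwa [hσother a d' hd, hσother b d' hd] at this

lemma cnt_abs (hS : IsDS S) (hA : IsDS A) (x : V N) :
    cnt S A x = cnt S A (fun d => |x d|) := by
  classical
  set flip : V N → V N := fun j d => if x d < 0 then -(j d) else j d with hflip
  have habs : ∀ j : V N, ∀ d, |flip j d| = |j d| := by
    intro j d; by_cases h : x d < 0 <;> simp [hflip, h]
  have hmem : ∀ j : V N, j ∈ A → flip j ∈ A := by
    intro j hj; exact hA j hj _ (fun d => (habs j d).le)
  have hinv : ∀ j : V N, flip (flip j) = j := by
    intro j; funext d; by_cases h : x d < 0 <;> simp [hflip, h]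
  have hfwd : ∀ j : V N, j - x ∈ S → flip j - (fun d => |x d|) ∈ S := by
    intro j hj
    apply hS _ hj
    intro d
    by_cases h : x d < 0
    · simp only [Pi.sub_apply, hflip, if_pos h, abs_of_neg h]
      have : -j d - -x d = -(j d - x d) := by ring
      rw [this, abs_neg]
    · simp [Pi.sub_apply, hflip, if_neg h, abs_of_nonneg (not_lt.mp h)]
  have hbwd : ∀ k : V N, k - (fun d => |x d|) ∈ S → flip k - x ∈ S := by
    intro k hk
    apply hS _ hk
    intro d
    by_cases h : x d < 0
    · simp only [Pi.sub_apply, hflip, if_pos h, abs_of_neg h]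
      have : -k d - x d = -(k d - -x d) := by ring
      rw [this, abs_neg]
    · simp [Pi.sub_apply, hflip, if_neg h, abs_of_nonneg (not_lt.mp h)]
  unfold cnt
  apply Finset.card_bij' (fun j _ => flip j) (fun k _ => flip k)
  · intro j hj
    rw [Finset.mem_filter] at hj ⊢
    exact ⟨hmem j hj.1, hfwd j hj.2⟩
  · intro k hk
    rw [Finset.mem_filter] at hk ⊢
    refine ⟨hmem k hk.1, ?_⟩
    exact hbwd k hk.2
  · intro j _; exact hinv j
  · intro k _; exact hinv k

lemma cnt_mono_nonneg (hS : IsDS S) (hA : IsDS A) :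
    ∀ n : ℕ, ∀ x y : V N, (∀ d, 0 ≤ y d) → (∀ d, y d ≤ x d) →
      (∑ d, (x d - y d)).toNat ≤ n → cnt S A x ≤ cnt S A y := by
  intro n
  induction n with
  | zero =>
    intro x y hy hxy hsum
    have : ∀ d, x d = y d := by
      intro d
      by_contra h
      have h1 : 1 ≤ x d - y d := by have := hxy d; omega
      have h2 : x d - y d ≤ ∑ d', (x d' - y d') := by
        simpa using Finset.single_le_sum (f := fun d => x d - y d)
          (fun d _ => by simpa using sub_nonneg.mpr (hxy d)) (Finset.mem_univ d)
      omega
    have : x = y := funext this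
    rw [this]
  | succ n ih =>
    intro x y hy hxy hsum
    by_cases hall : ∀ d, x d = y d
    · rw [funext hall]
    · push_neg at hall
      obtain ⟨d, hd⟩ := hall
      have hxd : 1 ≤ x d := by have := hxy d; have := hy d; omega
      have step := cnt_step hS hA x d hxd
      set x' := Function.update x d (x d - 1) with hx'
      have hx'y : ∀ d', y d' ≤ x' d' := by
        intro d'
        by_cases h : d' = d
        · subst h; simp [hx']; have := hxy d'; omega
        · simp [hx', Function.update_of_ne h]; exact hxy d'
      have hsum' : (∑ d', (x' d' - y d')).toNat ≤ n := by
        have hsplit : ∑ d', (x d' - y d') = (x d - y d) + ∑ d' ∈ Finset.univ.erase d, (x d' - y d') :=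
          (Finset.add_sum_erase Finset.univ (fun d' => x d' - y d') (Finset.mem_univ d)).symm
        have hsplit' : ∑ d', (x' d' - y d') = (x' d - y d) + ∑ d' ∈ Finset.univ.erase d, (x' d' - y d') :=
          (Finset.add_sum_erase Finset.univ (fun d' => x' d' - y d') (Finset.mem_univ d)).symm
        have heq : ∑ d' ∈ Finset.univ.erase d, (x' d' - y d') = ∑ d' ∈ Finset.univ.erase d, (x d' - y d') := by
          apply Finset.sum_congr rfl
          intro d' hd'
          simp [hx', Function.update_of_ne (Finset.ne_of_mem_erase hd')]
        have hx'd : x' d = x d - 1 := by simp [hx']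
        have hnneg : (0:ℤ) ≤ ∑ d' ∈ Finset.univ.erase d, (x d' - y d') :=
          Finset.sum_nonneg (fun d' _ => by have := hxy d'; omega)
        have hyd := hxy d
        omega
      exact le_trans step (ih x' y hy hx'y hsum')

lemma cnt_mono (hS : IsDS S) (hA : IsDS A) {x y : V N} (h : ∀ d, |y d| ≤ |x d|) :
    cnt S A x ≤ cnt S A y := by
  rw [cnt_abs hS hA x, cnt_abs hS hA y]
  exact cnt_mono_nonneg hS hA _ _ _ (fun d => abs_nonneg _) h le_rfl

lemma sub_mem_symm (hS : IsDS S) {a b : V N} (h : a - b ∈ S) : b - a ∈ S := by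
  apply hS _ h
  intro d
  simp [Pi.sub_apply, abs_sub_comm]

/-- reflection bound: points far outside the box see at most half of `A` -/
lemma cnt_outside (hS : IsDS S) {r : ℕ} (hAbox : A ⊆ box N r) {v : V N}
    (hv : v ∉ box N r) : 2 * cnt S A v ≤ S.card := by
  classical
  rw [mem_box] at hv
  push_neg at hv
  obtain ⟨d, hd⟩ := hv
  set σ : V N → V N := fun j => Function.update j d (2 * v d - j d) with hσ
  have hσd : ∀ j, σ j d = 2 * v d - j d := by intro j; simp [hσ]
  have hσo : ∀ (j : V N) (d'), d' ≠ d → σ j d' = j d' := by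
    intro j d' h; simp [hσ, Function.update_of_ne h]
  set D := A.filter (fun j => j - v ∈ S) with hD
  set F := S.image (fun s => v + s) with hF
  have hDF : D ⊆ F := by
    intro j hj
    rw [Finset.mem_filter] at hj
    rw [hF, Finset.mem_image]
    exact ⟨j - v, hj.2, by abel⟩
  have hσS : ∀ j : V N, j - v ∈ S → σ j - v ∈ S := by
    intro j hj
    apply hS _ hj
    intro d'
    by_cases h : d' = d
    · subst h
      simp only [Pi.sub_apply, hσd]
      have : 2 * v d' - j d' - v d' = -(j d' - v d') := by ring
      rw [this, abs_neg]
    · simp [Pi.sub_apply, hσo j d' h]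
  have hσF : ∀ j ∈ D, σ j ∈ F := by
    intro j hj
    rw [hD, Finset.mem_filter] at hj
    rw [hF, Finset.mem_image]
    exact ⟨σ j - v, hσS j hj.2, by abel⟩
  have hσnA : ∀ j ∈ D, σ j ∉ A := by
    intro j hj hmem
    have h1 : |σ j d| ≤ r := mem_box.mp (hAbox hmem) d
    have h2 : |j d| ≤ (r:ℤ) := mem_box.mp (hAbox (Finset.mem_filter.mp (hD ▸ hj)).1) d
    rw [hσd] at h1
    have h3 : |2 * v d| - |j d| ≤ |2 * v d - j d| := abs_sub_abs_le_abs_sub _ _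
    have h4 : |2 * v d| = 2 * |v d| := by rw [abs_mul]; simp
    omega
  set T := D.image σ with hT
  have hcard : T.card = D.card := by
    rw [hT]
    apply Finset.card_image_of_injOn
    intro a ha b hb hab
    funext d'
    by_cases h : d' = d
    · subst h
      have := congrFun hab d'
      rw [hσd, hσd] at this
      omega
    · have := congrFun hab d'
      rwa [hσo a d' h, hσo b d' h] at this
  have hdisj : Disjoint D T := by
    rw [Finset.disjoint_right]
    intro t ht htD
    rw [hT, Finset.mem_image] at ht
    obtain ⟨j, hj, rfl⟩ := ht
    exact hσnA j hj (Finset.mem_filter.mp (hD ▸ htD)).1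
  have hsub : D ∪ T ⊆ F := by
    intro t ht
    rcases Finset.mem_union.mp ht with h | h
    · exact hDF h
    · rw [hT, Finset.mem_image] at h
      obtain ⟨j, hj, rfl⟩ := h
      exact hσF j hj
  have h5 : D.card + T.card ≤ F.card := by
    rw [← Finset.card_union_of_disjoint hdisj]
    exact Finset.card_le_card hsub
  have h6 : F.card = S.card := Finset.card_image_of_injective _ (fun a b h => by
    simpa using h)
  have : cnt S A v = D.card := rfl
  omega

/-- double counting -/
lemma swap_sum (hS : IsDS S) (A U : Finset (V N)) :
    ∑ i ∈ A, (U.filter fun j => j - i ∈ S).card = ∑ j ∈ U, cnt S A j := by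
  classical
  have hsym : ∀ a b : V N, (a - b ∈ S) = (b - a ∈ S) := by
    intro a b
    exact propext ⟨sub_mem_symm hS, sub_mem_symm hS⟩
  calc ∑ i ∈ A, (U.filter fun j => j - i ∈ S).card
      = ∑ i ∈ A, ∑ j ∈ U, if j - i ∈ S then 1 else 0 := by
        apply Finset.sum_congr rfl; intro i _; rw [Finset.card_filter]
    _ = ∑ j ∈ U, ∑ i ∈ A, if j - i ∈ S then 1 else 0 := Finset.sum_comm
    _ = ∑ j ∈ U, ∑ i ∈ A, if i - j ∈ S then 1 else 0 := by
        apply Finset.sum_congr rfl; intro j _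
        apply Finset.sum_congr rfl; intro i _
        simp only [hsym]
    _ = ∑ j ∈ U, cnt S A j := by
        apply Finset.sum_congr rfl; intro j _
        rw [cnt, Finset.card_filter]

lemma cnt_split (P : V N → Prop) [DecidablePred P] (hU : U ⊆ A) (i : V N) :
    cnt S A i = cnt S (A \ U) i + (U.filter fun j => j - i ∈ S).card := by
  classical
  rw [cnt, cnt]
  rw [← Finset.card_union_of_disjoint]
  · congr 1
    rw [← Finset.filter_union]
    congr 1
    exact (Finset.sdiff_union_of_subset hU).symm
  · exact Finset.disjoint_filter_filter (Finset.sdiff_disjoint)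

lemma phi_removal (hS : IsDS S) (h0 : (0 : V N) ∈ S) (hU : U ⊆ A)
    (h : ∀ u ∈ U, 2 * cnt S A u + 1 ≤ S.card) :
    phi S (A \ U) + 2 * U.card ≤ phi S A := by
  classical
  set A' := A \ U with hA'
  set uct : V N → ℕ := fun i => (U.filter fun j => j - i ∈ S).card with huct
  have hsplit : ∀ i, cnt S A i = cnt S A' i + uct i := fun i => cnt_split (fun _ => True) hU i
  have hener : ener S A = ∑ i ∈ A', cnt S A i + ∑ i ∈ U, cnt S A i := by
    rw [ener, hA']
    exact (Finset.sum_sdiff hU).symm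
  set s := ∑ u ∈ U, cnt S A u with hs
  set M := ∑ i ∈ A', uct i with hM
  have e1 : ener S A = ener S A' + M + s := by
    rw [hener, ener]
    have : ∑ i ∈ A', cnt S A i = ∑ i ∈ A', (cnt S A' i + uct i) :=
      Finset.sum_congr rfl (fun i _ => hsplit i)
    rw [this, Finset.sum_add_distrib]
  have e2 : M + ∑ i ∈ U, uct i = s := by
    have := swap_sum hS A U
    rw [← hs] at this
    rw [hM, huct]
    rw [← this, hA']
    exact Finset.sum_sdiff hU
  have e3 : U.card ≤ ∑ i ∈ U, uct i := by
    rw [Finset.card_eq_sum_ones U]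
    apply Finset.sum_le_sum
    intro i hi
    rw [huct]
    have : i ∈ U.filter fun j => j - i ∈ S :=
      Finset.mem_filter.mpr ⟨hi, by simpa using h0⟩
    exact Finset.card_pos.mpr ⟨i, this⟩
  have e4 : 2 * s + U.card ≤ S.card * U.card := by
    calc 2 * s + U.card = ∑ u ∈ U, (2 * cnt S A u + 1) := by
          rw [Finset.sum_add_distrib, ← Finset.mul_sum, ← hs, Finset.sum_const, smul_eq_mul, mul_one]
      _ ≤ ∑ _u ∈ U, S.card := Finset.sum_le_sum h
      _ = S.card * U.card := by rw [Finset.sum_const, smul_eq_mul, mul_comm]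
  have e5 : ener S A' ≤ S.card * A'.card := ener_le S A'
  have e6 : ener S A ≤ S.card * A.card := ener_le S A
  have e7 : A'.card + U.card = A.card := by
    rw [hA', Finset.card_sdiff_of_subset hU]
    have := Finset.card_le_card hU
    omega
  have e8 : S.card * A'.card + S.card * U.card = S.card * A.card := by
    rw [← Nat.mul_add, e7]
  rw [phi, phi]
  omega

lemma phi_addition (hS : IsDS S) (h0 : (0 : V N) ∈ S) (hd : Disjoint W A)
    (h : ∀ v ∈ W, S.card + 1 ≤ 2 * cnt S A v) :
    phi S (A ∪ W) + 2 * W.card ≤ phi S A := by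
  classical
  set B := A ∪ W with hB
  set vct : V N → ℕ := fun i => (W.filter fun j => j - i ∈ S).card with hvct
  have hWB : W ⊆ B := Finset.subset_union_right
  have hBW : B \ W = A := by
    rw [hB, Finset.union_sdiff_right, Finset.sdiff_eq_self_of_disjoint (Finset.disjoint_of_subset_right Finset.Subset.rfl hd.symm)]
  have hsplit : ∀ i, cnt S B i = cnt S A i + vct i := by
    intro i
    have := cnt_split (S := S) (fun _ => True) hWB i
    rwa [hBW] at this
  have hener : ener S B = ∑ i ∈ A, cnt S B i + ∑ i ∈ W, cnt S B i := by
    rw [ener, ← hBW]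
    have := (Finset.sum_sdiff (f := fun i => cnt S B i) hWB).symm
    rw [hBW] at this ⊢
    exact this
  set s := ∑ v ∈ W, cnt S A v with hs
  set t := ∑ v ∈ W, vct v with ht
  have e1 : ener S B = ener S A + 2 * s + t := by
    rw [hener]
    have h1 : ∑ i ∈ A, cnt S B i = ener S A + s := by
      rw [ener]
      have : ∑ i ∈ A, cnt S B i = ∑ i ∈ A, (cnt S A i + vct i) :=
        Finset.sum_congr rfl (fun i _ => hsplit i)
      rw [this, Finset.sum_add_distrib]
      congr 1
      rw [hvct, hs]
      exact swap_sum hS A W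
    have h2 : ∑ i ∈ W, cnt S B i = s + t := by
      have : ∑ i ∈ W, cnt S B i = ∑ i ∈ W, (cnt S A i + vct i) :=
        Finset.sum_congr rfl (fun i _ => hsplit i)
      rw [this, Finset.sum_add_distrib, ← hs, ← ht]
    rw [h1, h2]
    ring
  have e3 : W.card ≤ t := by
    rw [ht, Finset.card_eq_sum_ones W]
    apply Finset.sum_le_sum
    intro i hi
    rw [hvct]
    have : i ∈ W.filter fun j => j - i ∈ S :=
      Finset.mem_filter.mpr ⟨hi, by simpa using h0⟩
    exact Finset.card_pos.mpr ⟨i, this⟩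
  have e4 : S.card * W.card + W.card ≤ 2 * s := by
    calc S.card * W.card + W.card = ∑ _v ∈ W, (S.card + 1) := by
          rw [Finset.sum_const, smul_eq_mul]; ring
      _ ≤ ∑ v ∈ W, 2 * cnt S A v := Finset.sum_le_sum h
      _ = 2 * s := by rw [← Finset.mul_sum, ← hs]
  have e5 : ener S A ≤ S.card * A.card := ener_le S A
  have e6 : ener S B ≤ S.card * B.card := ener_le S B
  have e7 : B.card = A.card + W.card := by
    rw [hB, Finset.card_union_of_disjoint hd.symm]
  have e8 : S.card * B.card = S.card * A.card + S.card * W.card := by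
    rw [e7, Nat.mul_add]
  rw [phi, phi]
  omega

lemma reach (hS : IsDS S) (h0 : (0 : V N) ∈ S) (r : ℕ) :
    ∀ A : Finset (V N), A ⊆ box N r → IsDS A →
      ∃ B, B ⊆ box N r ∧ IsDS B ∧ StableF S B ∧
        2 * ((box N r) \ B).card ≤ 2 * ((box N r) \ A).card + phi S A := by
  classical
  suffices H : ∀ n : ℕ, ∀ A : Finset (V N), phi S A ≤ n → A ⊆ box N r → IsDS A →
      ∃ B, B ⊆ box N r ∧ IsDS B ∧ StableF S B ∧
        2 * ((box N r) \ B).card ≤ 2 * ((box N r) \ A).card + phi S A by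
    exact fun A h1 h2 => H (phi S A) A le_rfl h1 h2
  intro n
  induction n using Nat.strong_induction_on with
  | _ n ih =>
    intro A hphi hbox hDS
    set U := A.filter (fun u => 2 * cnt S A u + 1 ≤ S.card) with hU
    set W := (box N r).filter (fun v => v ∉ A ∧ S.card + 1 ≤ 2 * cnt S A v) with hW
    by_cases hUe : U = ∅
    · by_cases hWe : W = ∅
      · -- stable
        refine ⟨A, hbox, hDS, ⟨?_, ?_⟩, le_add_right le_rfl⟩
        · intro i hi
          have : i ∉ U := by rw [hUe]; exact Finset.notMem_empty i
          rw [hU, Finset.mem_filter] at this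
          push_neg at this
          have := this hi
          omega
        · intro i hi
          by_cases hib : i ∈ box N r
          · have : i ∉ W := by rw [hWe]; exact Finset.notMem_empty i
            rw [hW, Finset.mem_filter] at this
            push_neg at this
            have := this hib hi
            omega
          · exact cnt_outside hS hbox hib
      · -- add W
        have hWne : W.Nonempty := Finset.nonempty_iff_ne_empty.mpr hWe
        have hdisj : Disjoint W A := by
          rw [Finset.disjoint_left]
          intro v hv
          exact ((Finset.mem_filter.mp (hW ▸ hv)).2).1
        have hcond : ∀ v ∈ W, S.card + 1 ≤ 2 * cnt S A v := by
          intro v hv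
          exact ((Finset.mem_filter.mp (hW ▸ hv)).2).2
        have hdec := phi_addition hS h0 hdisj hcond
        have hA'box : A ∪ W ⊆ box N r :=
          Finset.union_subset hbox (hW ▸ Finset.filter_subset _ _)
        have hA'DS : IsDS (A ∪ W) := by
          intro x hx t ht
          rcases Finset.mem_union.mp hx with h | h
          · exact Finset.mem_union_left _ (hDS x h t ht)
          · rw [hW, Finset.mem_filter] at h
            obtain ⟨hxb, hxA, hxc⟩ := h
            by_cases htA : t ∈ A
            · exact Finset.mem_union_left _ htA
            · refine Finset.mem_union_right _ ?_
              rw [hW, Finset.mem_filter]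
              refine ⟨box_isDS r x hxb t ht, htA, ?_⟩
              have := cnt_mono hS hDS ht
              omega
        have hWcard : 1 ≤ W.card := Finset.card_pos.mpr hWne
        have hlt : phi S (A ∪ W) < n := by omega
        obtain ⟨B, hB1, hB2, hB3, hB4⟩ := ih _ hlt (A ∪ W) le_rfl hA'box hA'DS
        refine ⟨B, hB1, hB2, hB3, ?_⟩
        have hmono : ((box N r) \ (A ∪ W)).card ≤ ((box N r) \ A).card :=
          Finset.card_le_card (Finset.sdiff_subset_sdiff Finset.Subset.rfl Finset.subset_union_left)
        omega
    · -- remove U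
      have hUne : U.Nonempty := Finset.nonempty_iff_ne_empty.mpr hUe
      have hUsub : U ⊆ A := hU ▸ Finset.filter_subset _ _
      have hcond : ∀ u ∈ U, 2 * cnt S A u + 1 ≤ S.card := by
        intro u hu
        exact (Finset.mem_filter.mp hu).2
      have hdec := phi_removal hS h0 hUsub hcond
      have hA'box : A \ U ⊆ box N r := Finset.Subset.trans Finset.sdiff_subset hbox
      have hA'DS : IsDS (A \ U) := by
        intro x hx t ht
        obtain ⟨hxA, hxU⟩ := Finset.mem_sdiff.mp hx
        refine Finset.mem_sdiff.mpr ⟨hDS x hxA t ht, ?_⟩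
        intro htU
        apply hxU
        rw [hU, Finset.mem_filter] at htU ⊢
        have := cnt_mono hS hDS ht
        refine ⟨hxA, ?_⟩
        omega
      have hUcard : 1 ≤ U.card := Finset.card_pos.mpr hUne
      have hlt : phi S (A \ U) < n := by omega
      obtain ⟨B, hB1, hB2, hB3, hB4⟩ := ih _ hlt (A \ U) le_rfl hA'box hA'DS
      refine ⟨B, hB1, hB2, hB3, ?_⟩
      have hmono : ((box N r) \ (A \ U)).card ≤ ((box N r) \ A).card + U.card := by
        have hsub : (box N r) \ (A \ U) ⊆ ((box N r) \ A) ∪ U := by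
          intro t ht
          obtain ⟨htb, htn⟩ := Finset.mem_sdiff.mp ht
          rw [Finset.mem_sdiff] at htn
          push_neg at htn
          by_cases htA : t ∈ A
          · exact Finset.mem_union_right _ (htn htA)
          · exact Finset.mem_union_left _ (Finset.mem_sdiff.mpr ⟨htb, htA⟩)
        calc ((box N r) \ (A \ U)).card ≤ (((box N r) \ A) ∪ U).card := Finset.card_le_card hsub
          _ ≤ ((box N r) \ A).card + U.card := Finset.card_union_le _ _
      omega

lemma pow_bound (a b c : ℕ) (h : b + c = a) :
    ∀ n : ℕ, a^(n+1) ≤ b^(n+1) + (n+1)*c*a^n := by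
  intro n
  induction n with
  | zero => simp; omega
  | succ n ih =>
    have hba : b ≤ a := by omega
    calc a^(n+2) = a * a^(n+1) := by ring
      _ ≤ a * (b^(n+1) + (n+1)*c*a^n) := Nat.mul_le_mul_left _ ih
      _ = a*b^(n+1) + (n+1)*c*a^(n+1) := by ring
      _ = b*b^(n+1) + c*b^(n+1) + (n+1)*c*a^(n+1) := by rw [← h]; ring
      _ ≤ b*b^(n+1) + c*a^(n+1) + (n+1)*c*a^(n+1) := by
          have : b^(n+1) ≤ a^(n+1) := Nat.pow_le_pow_left hba _
          have := Nat.mul_le_mul_left c this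
          omega
      _ = b^(n+2) + (n+2)*c*a^(n+1) := by ring

lemma cnt_box_full {w r : ℕ} (hSbox : S ⊆ box N w) (hwr : w ≤ r) {i : V N}
    (hi : i ∈ box N (r - w)) : S.card ≤ cnt S (box N r) i := by
  apply Finset.card_le_card_of_injOn (fun s => i + s)
  · intro s hs
    rw [Finset.mem_coe, Finset.mem_filter]
    constructor
    · rw [mem_box]
      intro d
      have h1 : |i d| ≤ ((r - w : ℕ) : ℤ) := mem_box.mp hi d
      have h2 : |s d| ≤ (w : ℤ) := mem_box.mp (hSbox hs) d
      have h3 : ((r - w : ℕ) : ℤ) = (r : ℤ) - (w : ℤ) := by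
        push_cast [hwr]; ring
      calc |i d + s d| ≤ |i d| + |s d| := abs_add_le _ _
        _ ≤ (r : ℤ) := by omega
    · simpa using hs
  · intro a _ b _ h
    simpa using h

lemma phi_box_bound {w r : ℕ} (hSbox : S ⊆ box N w) (hwr : w ≤ r) :
    phi S (box N r) ≤ S.card * ((box N r).card - (box N (r - w)).card) := by
  have hsub : box N (r - w) ⊆ box N r := by
    intro x hx
    rw [mem_box] at hx ⊢
    intro d
    calc |x d| ≤ ((r - w : ℕ) : ℤ) := hx d
      _ ≤ (r : ℤ) := by push_cast; omega
  have hener : S.card * (box N (r - w)).card ≤ ener S (box N r) := by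
    calc S.card * (box N (r - w)).card = ∑ _i ∈ box N (r - w), S.card := by
          rw [Finset.sum_const, smul_eq_mul, mul_comm]
      _ ≤ ∑ i ∈ box N (r - w), cnt S (box N r) i :=
          Finset.sum_le_sum (fun i hi => cnt_box_full hSbox hwr hi)
      _ ≤ ∑ i ∈ box N r, cnt S (box N r) i :=
          Finset.sum_le_sum_of_subset hsub
      _ = ener S (box N r) := rfl
  have h1 := phi_add S (box N r)
  have hc : (box N (r-w)).card ≤ (box N r).card := Finset.card_le_card hsub
  have hmul : S.card * ((box N r).card - (box N (r-w)).card) + S.card * (box N (r-w)).card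
      = S.card * (box N r).card := by
    rw [← Nat.mul_add]
    congr 1
    omega
  omega

theorem main_abstract (hN : 1 ≤ N) {w : ℕ} (hw : 1 ≤ w) (S : Finset (V N))
    (hS : IsDS S) (h0 : (0 : V N) ∈ S) (hSbox : S ⊆ box N w) :
    ∃ B : Finset (V N), B.Nonempty ∧ (0 : V N) ∈ B ∧
      B ⊆ box N (N * (2*w+1)^(N+1)) ∧ IsDS B ∧ StableF S B := by
  set r := N * (2*w+1)^(N+1) with hr
  have hwr : w ≤ r := by
    have h1 : 2*w+1 ≤ (2*w+1)^(N+1) := Nat.le_self_pow (by omega) _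
    have h2 : (2*w+1)^(N+1) ≤ N * (2*w+1)^(N+1) := Nat.le_mul_of_pos_left _ (by omega)
    omega
  -- strict bound phi(box r) < 2 * card (box r)
  have hbound : phi S (box N r) < 2 * (box N r).card := by
    set a := 2*r+1 with ha
    set b := 2*(r-w)+1 with hb
    have hab : b + 2*w = a := by
      rw [ha, hb]; omega
    obtain ⟨n, hn⟩ : ∃ n, N = n + 1 := ⟨N - 1, by omega⟩
    have hpow := pow_bound a b (2*w) hab n
    have hc0 : (box N r).card = a^N := by rw [card_box, ha]
    have hc1 : (box N (r-w)).card = b^N := by rw [card_box, hb]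
    have hphi := phi_box_bound hSbox hwr
    have hbeta : S.card ≤ (2*w+1)^N := by
      calc S.card ≤ (box N w).card := Finset.card_le_card hSbox
        _ = (2*w+1)^N := card_box w
    have hdiff : a^N - b^N ≤ N * (2*w) * a^n := by
      have e1 : a^N = a^(n+1) := by rw [hn]
      have e2 : b^N = b^(n+1) := by rw [hn]
      have e3 : N * (2*w) * a^n = (n+1) * (2*w) * a^n := by rw [hn]
      omega
    have hstep1 : phi S (box N r) ≤ (2*w+1)^N * (N * (2*w) * a^n) := by
      calc phi S (box N r) ≤ S.card * ((box N r).card - (box N (r-w)).card) := hphi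
        _ ≤ (2*w+1)^N * (a^N - b^N) := by
            rw [hc0, hc1]
            exact Nat.mul_le_mul hbeta le_rfl
        _ ≤ (2*w+1)^N * (N * (2*w) * a^n) := Nat.mul_le_mul_left _ hdiff
    have hr1 : N * (2*w) * (2*w+1)^N ≤ r := by
      rw [hr]
      have : (2*w) * (2*w+1)^N ≤ (2*w+1)^(N+1) := by
        rw [pow_succ, mul_comm ((2*w+1)^N) (2*w+1)]
        exact Nat.mul_le_mul (by omega) le_rfl
      calc N * (2*w) * (2*w+1)^N = N * ((2*w) * (2*w+1)^N) := by ring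
        _ ≤ N * (2*w+1)^(N+1) := Nat.mul_le_mul_left _ this
    have hapos : 1 ≤ a^n := Nat.one_le_pow _ _ (by omega)
    have hrpos : 1 ≤ r := by
      have : 1 ≤ (2*w+1)^(N+1) := Nat.one_le_pow _ _ (by omega)
      have : 1*1 ≤ N * (2*w+1)^(N+1) := Nat.mul_le_mul hN this
      omega
    have hfin : (2*w+1)^N * (N * (2*w) * a^n) < 2 * a^N := by
      calc (2*w+1)^N * (N * (2*w) * a^n) = (N * (2*w) * (2*w+1)^N) * a^n := by ring
        _ ≤ r * a^n := Nat.mul_le_mul hr1 le_rfl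
        _ < (2*a - 2*r) * a^n + r * a^n := by
            have h2a : 2*a - 2*r = 2*r + 2 := by rw [ha]; omega
            rw [h2a]
            have h1 : 1*1 ≤ (2*r+2) * a^n := Nat.mul_le_mul (by omega) hapos
            omega
        _ ≤ 2 * a^N := by
            rw [hn, pow_succ]
            have h2a : 2*a - 2*r = 2*r + 2 := by rw [ha]; omega
            have hra : r ≤ a := by rw [ha]; omega
            calc (2*a - 2*r) * a^n + r * a^n = (2*a - 2*r + r) * a^n := by ring
              _ ≤ (2*a) * a^n := Nat.mul_le_mul (by omega) le_rfl
              _ = 2 * (a^n * a) := by ring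
    rw [hc0]
    omega
  obtain ⟨B, hB1, hB2, hB3, hB4⟩ := reach hS h0 r (box N r) Finset.Subset.rfl (box_isDS r)
  rw [Finset.sdiff_self, Finset.card_empty] at hB4
  have hBne : B.Nonempty := by
    by_contra hB
    rw [Finset.not_nonempty_iff_eq_empty] at hB
    rw [hB, Finset.sdiff_empty] at hB4
    omega
  obtain ⟨x, hx⟩ := hBne
  have h0B : (0 : V N) ∈ B := hB2 x hx 0 (fun d => by simp)
  exact ⟨B, ⟨x, hx⟩, h0B, hB1, hB2, hB3⟩

/-- every element of a symmetric down-set is joined to `0` inside it -/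
lemma path_to_zero (hB : IsDS B) :
    ∀ m : ℕ, ∀ x : V N, (∑ d, (x d).natAbs) ≤ m → x ∈ B →
      ∃ n : ℕ, ∃ f : ℕ → V N, f 0 = x ∧ f n = 0 ∧ (∀ k ≤ n, f k ∈ B) ∧
        ∀ k < n, (∑ d, |f (k + 1) d - f k d|) ≤ 1 := by
  intro m
  induction m with
  | zero =>
    intro x hsum hx
    have hx0 : x = 0 := by
      funext d
      have h1 : (x d).natAbs ≤ ∑ d', (x d').natAbs :=
        Finset.single_le_sum (f := fun d => (x d).natAbs) (fun _ _ => Nat.zero_le _)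
          (Finset.mem_univ d)
      have : (x d).natAbs = 0 := by omega
      simpa [Int.natAbs_eq_zero] using this
    subst hx0
    exact ⟨0, fun _ => 0, rfl, rfl, fun k _ => hx, fun k hk => by omega⟩
  | succ m ih =>
    intro x hsum hx
    by_cases hx0 : x = 0
    · subst hx0
      exact ⟨0, fun _ => 0, rfl, rfl, fun k _ => hx, fun k hk => by omega⟩
    · have : ∃ d, x d ≠ 0 := by
        by_contra h
        push_neg at h
        exact hx0 (funext h)
      obtain ⟨d, hd⟩ := this
      set x' : V N := Function.update x d (if 0 < x d then x d - 1 else x d + 1) with hx'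
      have hx'd : x' d = if 0 < x d then x d - 1 else x d + 1 := by simp [hx']
      have hx'o : ∀ d', d' ≠ d → x' d' = x d' := by
        intro d' h; simp [hx', Function.update_of_ne h]
      have habs : ∀ d', |x' d'| ≤ |x d'| := by
        intro d'
        by_cases h : d' = d
        · subst h
          rw [hx'd]
          by_cases h2 : 0 < x d'
          · rw [if_pos h2, abs_of_pos h2, abs_of_nonneg (by omega)]; omega
          · have h3 : x d' < 0 := lt_of_le_of_ne (not_lt.mp h2) hd
            rw [if_neg h2, abs_of_neg h3, abs_of_nonpos (by omega)]; omega
        · rw [hx'o d' h]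
      have hx'B : x' ∈ B := hB x hx x' habs
      have hnatabs : (x' d).natAbs + 1 = (x d).natAbs := by
        rw [hx'd]
        by_cases h2 : 0 < x d
        · rw [if_pos h2]; omega
        · rw [if_neg h2]
          have h3 : x d < 0 := lt_of_le_of_ne (not_lt.mp h2) hd
          omega
      have hsum' : (∑ d', (x' d').natAbs) ≤ m := by
        have hsplit : ∑ d', (x d').natAbs
            = (x d).natAbs + ∑ d' ∈ Finset.univ.erase d, (x d').natAbs :=
          (Finset.add_sum_erase Finset.univ (fun d' => (x d').natAbs) (Finset.mem_univ d)).symm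
        have hsplit' : ∑ d', (x' d').natAbs
            = (x' d).natAbs + ∑ d' ∈ Finset.univ.erase d, (x' d').natAbs :=
          (Finset.add_sum_erase Finset.univ (fun d' => (x' d').natAbs) (Finset.mem_univ d)).symm
        have heq : ∑ d' ∈ Finset.univ.erase d, (x' d').natAbs
            = ∑ d' ∈ Finset.univ.erase d, (x d').natAbs :=
          Finset.sum_congr rfl (fun d' hd' => by
            rw [hx'o d' (Finset.ne_of_mem_erase hd')])
        omega
      obtain ⟨n', f', hf0, hfn, hfB, hfstep⟩ := ih x' hsum' hx'B
      set g : ℕ → V N := fun k => if k = 0 then x else f' (k - 1) with hg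
      have hg0 : g 0 = x := by simp [hg]
      have hgk : ∀ k : ℕ, k ≠ 0 → g k = f' (k - 1) := by
        intro k h; simp [hg, h]
      refine ⟨n' + 1, g, hg0, ?_, ?_, ?_⟩
      · rw [hgk (n'+1) (by omega)]
        simpa using hfn
      · intro k hk
        by_cases h : k = 0
        · rw [h, hg0]; exact hx
        · rw [hgk k h]
          exact hfB (k-1) (by omega)
      · intro k hk
        by_cases h : k = 0
        · subst h
          rw [hgk 1 (by omega), hg0]
          have h1 : f' (1 - 1) = x' := by simpa using hf0
          rw [h1]
          have h2 : ∑ d', |x' d' - x d'| = |x' d - x d| := by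
            rw [(Finset.add_sum_erase Finset.univ (fun d' => |x' d' - x d'|)
              (Finset.mem_univ d)).symm]
            have h3 : ∑ d' ∈ Finset.univ.erase d, |x' d' - x d'| = 0 := by
              apply Finset.sum_eq_zero
              intro d' hd'
              rw [hx'o d' (Finset.ne_of_mem_erase hd')]
              simp
            omega
          rw [h2, hx'd]
          by_cases h2 : 0 < x d
          · rw [if_pos h2]; simp
          · rw [if_neg h2]; simp
        · rw [hgk (k+1) (by omega), hgk k h]
          have e : k + 1 - 1 = (k - 1) + 1 := by omega
          rw [e]
          exact hfstep (k - 1) (by omega)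

lemma isConn_of_isDS (hB : IsDS B) : IsConn N (↑B : Set (V N)) := by
  intro i hi j hj
  rw [Finset.mem_coe] at hi hj
  obtain ⟨n1, f1, h10, h1n, h1B, h1s⟩ := path_to_zero hB _ i le_rfl hi
  obtain ⟨n2, f2, h20, h2n, h2B, h2s⟩ := path_to_zero hB _ j le_rfl hj
  set g : ℕ → V N := fun k => if k ≤ n1 then f1 k else f2 (n1 + n2 - k) with hg
  have hgle : ∀ k, k ≤ n1 → g k = f1 k := by intro k h; simp [hg, h]
  have hggt : ∀ k, n1 < k → g k = f2 (n1 + n2 - k) := by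
    intro k h; simp [hg, Nat.not_le.mpr h]
  have hval : ∀ k, n1 ≤ k → g k = f2 (n1 + n2 - k) := by
    intro k h1
    rcases Nat.lt_or_ge n1 k with h | h
    · exact hggt k h
    · have hkn : k = n1 := by omega
      rw [hgle k h, hkn, h1n, show n1 + n2 - n1 = n2 by omega, h2n]
  refine ⟨n1 + n2, g, ?_, ?_, ?_, ?_⟩
  · rw [hgle 0 (by omega), h10]
  · rw [hval (n1+n2) (by omega), show n1 + n2 - (n1 + n2) = 0 by omega, h20]
  · intro k hk
    by_cases h : k ≤ n1
    · rw [hgle k h]; exact Finset.mem_coe.mpr (h1B k h)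
    · rw [hggt k (by omega)]
      exact Finset.mem_coe.mpr (h2B (n1 + n2 - k) (by omega))
  · intro k hk
    by_cases h : k + 1 ≤ n1
    · rw [hgle (k+1) h, hgle k (by omega)]
      exact h1s k (by omega)
    · have hk1 : n1 ≤ k := by omega
      rw [hval (k+1) (by omega), hval k hk1]
      have h1 : n1 + n2 - k = (n1 + n2 - (k + 1)) + 1 := by omega
      rw [h1]
      set a := n1 + n2 - (k + 1)
      calc ∑ d, |f2 a d - f2 (a+1) d| = ∑ d, |f2 (a+1) d - f2 a d| := by
            apply Finset.sum_congr rfl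
            intro d _
            rw [abs_sub_comm]
        _ ≤ 1 := h2s a (by omega)

lemma sector_eq (i : V N) (𝔑 : V N → Set (V N)) (h : ∀ j, j ∈ 𝔑 i ↔ j - i ∈ S)
    (P : V N → Prop) [DecidablePred P] :
    {j ∈ 𝔑 i | P j} = (↑((S.image (fun s => i + s)).filter P) : Set (V N)) := by
  ext j
  simp only [Set.mem_setOf_eq, Finset.coe_filter, Finset.mem_image]
  constructor
  · rintro ⟨h1, h2⟩
    exact ⟨⟨j - i, (h j).mp h1, by abel⟩, h2⟩
  · rintro ⟨⟨s, hs, rfl⟩, h2⟩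
    refine ⟨(h _).mpr ?_, h2⟩
    simpa using hs

lemma filter_mem_card (i : V N) :
    ((S.image (fun s => i + s)).filter (fun j => j ∈ B)).card = cnt S B i := by
  classical
  rw [cnt]
  congr 1
  ext j
  simp only [Finset.mem_filter, Finset.mem_image]
  constructor
  · rintro ⟨⟨s, hs, rfl⟩, h2⟩
    exact ⟨h2, by simpa using hs⟩
  · rintro ⟨h1, h2⟩
    exact ⟨⟨j - i, h2, by abel⟩, h1⟩

lemma filter_not_mem_card (i : V N) :
    ((S.image (fun s => i + s)).filter (fun j => j ∉ B)).card = S.card - cnt S B i := by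
  classical
  have hinj : Function.Injective (fun s : V N => i + s) := fun a b h => by simpa using h
  have hcard : (S.image (fun s => i + s)).card = S.card := Finset.card_image_of_injective _ hinj
  have := Finset.card_filter_add_card_filter_not
    (s := S.image (fun s => i + s)) (p := fun j => j ∈ B)
  rw [hcard, filter_mem_card] at this
  omega

lemma isStableConf_of_stableF (hst : StableF S B) (𝔑 : V N → Set (V N))
    (h : ∀ i j, j ∈ 𝔑 i ↔ j - i ∈ S) : IsStableConf N 𝔑 (↑B : Set (V N)) := by
  classical
  intro i
  by_cases hi : i ∈ B
  · have hiA : i ∈ (↑B : Set (V N)) := hi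
    have e1 : {j ∈ 𝔑 i | ¬ (j ∈ (↑B : Set (V N)) ↔ i ∈ (↑B : Set (V N)))}
        = {j ∈ 𝔑 i | j ∉ B} := by
      ext j
      simp only [Set.mem_setOf_eq, Finset.mem_coe]
      constructor
      · rintro ⟨h1, h2⟩
        exact ⟨h1, fun hjb => h2 (iff_of_true hjb hi)⟩
      · rintro ⟨h1, h2⟩
        exact ⟨h1, fun hiff => h2 (hiff.mpr hi)⟩
    have e2 : {j ∈ 𝔑 i | (j ∈ (↑B : Set (V N)) ↔ i ∈ (↑B : Set (V N)))}
        = {j ∈ 𝔑 i | j ∈ B} := by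
      ext j
      simp only [Set.mem_setOf_eq, Finset.mem_coe]
      constructor
      · rintro ⟨h1, h2⟩
        exact ⟨h1, h2.mpr hi⟩
      · rintro ⟨h1, h2⟩
        exact ⟨h1, iff_of_true h2 hi⟩
    rw [e1, e2, sector_eq i 𝔑 (h i) (fun j => j ∉ B), sector_eq i 𝔑 (h i) (fun j => j ∈ B),
      Set.ncard_coe_finset, Set.ncard_coe_finset, filter_mem_card, filter_not_mem_card]
    have h1 := hst.1 i hi
    have h2 := cnt_le S B i
    omega
  · have e1 : {j ∈ 𝔑 i | ¬ (j ∈ (↑B : Set (V N)) ↔ i ∈ (↑B : Set (V N)))}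
        = {j ∈ 𝔑 i | j ∈ B} := by
      ext j
      simp only [Set.mem_setOf_eq, Finset.mem_coe]
      constructor
      · rintro ⟨h1, h2⟩
        refine ⟨h1, ?_⟩
        by_contra hjb
        exact h2 (iff_of_false hjb hi)
      · rintro ⟨h1, h2⟩
        exact ⟨h1, fun hiff => hi (hiff.mp h2)⟩
    have e2 : {j ∈ 𝔑 i | (j ∈ (↑B : Set (V N)) ↔ i ∈ (↑B : Set (V N)))}
        = {j ∈ 𝔑 i | j ∉ B} := by
      ext j
      simp only [Set.mem_setOf_eq, Finset.mem_coe]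
      constructor
      · rintro ⟨h1, h2⟩
        exact ⟨h1, fun h3 => hi (h2.mp h3)⟩
      · rintro ⟨h1, h2⟩
        exact ⟨h1, iff_of_false h2 hi⟩
    rw [e1, e2, sector_eq i 𝔑 (h i) (fun j => j ∈ B), sector_eq i 𝔑 (h i) (fun j => j ∉ B),
      Set.ncard_coe_finset, Set.ncard_coe_finset, filter_mem_card, filter_not_mem_card]
    have h1 := hst.2 i hi
    have h2 := cnt_le S B i
    omega

/-! the two neighborhoods as difference-sets -/

lemma mem_nbhdLinf_iff {w : ℕ} (hw : 1 ≤ w) (i j : V N) :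
    j ∈ nbhdLinf N w i ↔ j - i ∈ box N (w - 1) := by
  rw [nbhdLinf, Set.mem_insert_iff, mem_box]
  have hcast : ((w - 1 : ℕ) : ℤ) = (w : ℤ) - 1 := by
    push_cast [hw]
    ring
  constructor
  · rintro (rfl | hmem)
    · intro d; simp
    · intro d
      have := hmem d
      simp only [Pi.sub_apply]
      omega
  · intro hmem
    right
    intro d
    have := hmem d
    rw [hcast] at this
    simp only [Pi.sub_apply] at this
    omega

noncomputable def SLp (N : ℕ) (p : ℝ) (w : ℕ) : Finset (V N) :=
  (box N w).filter (fun s => (∑ d, |(s d : ℝ)| ^ p) < (w : ℝ) ^ p)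

lemma SLp_zero_mem {p : ℝ} {w : ℕ} (hp : 1 ≤ p) (hw : 1 ≤ w) : (0 : V N) ∈ SLp N p w := by
  rw [SLp, Finset.mem_filter]
  constructor
  · rw [mem_box]; intro d; simp
  · have : ∀ d : Fin N, |((0:V N) d : ℝ)| ^ p = 0 := by
      intro d
      simp [Pi.zero_apply]
      rw [Real.zero_rpow (by linarith)]
    rw [Finset.sum_congr rfl (fun d _ => this d), Finset.sum_const, smul_zero]
    apply Real.rpow_pos_of_pos
    exact_mod_cast hw

lemma SLp_isDS {p : ℝ} {w : ℕ} (hp : 1 ≤ p) : IsDS (SLp N p w) := by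
  intro s hs t ht
  rw [SLp, Finset.mem_filter] at hs ⊢
  refine ⟨box_isDS w s hs.1 t ht, ?_⟩
  refine lt_of_le_of_lt (Finset.sum_le_sum (fun d _ => ?_)) hs.2
  apply Real.rpow_le_rpow (abs_nonneg _) _ (by linarith)
  have h1 : |(t d : ℝ)| = ((|t d| : ℤ) : ℝ) := by
    rw [Int.cast_abs]
  have h2 : |(s d : ℝ)| = ((|s d| : ℤ) : ℝ) := by
    rw [Int.cast_abs]
  rw [h1, h2]
  exact_mod_cast ht d

lemma SLp_subset {p : ℝ} {w : ℕ} : SLp N p w ⊆ box N w := Finset.filter_subset _ _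

lemma mem_nbhdLp_iff {p : ℝ} {w : ℕ} (hp : 1 ≤ p) (hw : 1 ≤ w) (i j : V N) :
    j ∈ nbhdLp N p w i ↔ j - i ∈ SLp N p w := by
  have hsum : (∑ d, |(j d : ℝ) - (i d : ℝ)| ^ p) = ∑ d, |((j - i) d : ℝ)| ^ p := by
    apply Finset.sum_congr rfl
    intro d _
    congr 1
    rw [Pi.sub_apply]
    push_cast
    ring
  rw [nbhdLp, Set.mem_insert_iff, SLp, Finset.mem_filter]
  constructor
  · rintro (rfl | hmem)
    · refine ⟨?_, ?_⟩
      · rw [mem_box]; intro d; simp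
      · have : ∀ d : Fin N, |((j - j) d : ℝ)| ^ p = 0 := by
          intro d
          simp
          rw [Real.zero_rpow (by linarith)]
        rw [Finset.sum_congr rfl (fun d _ => this d), Finset.sum_const, smul_zero]
        apply Real.rpow_pos_of_pos
        exact_mod_cast hw
    · rw [Set.mem_setOf_eq] at hmem
      rw [hsum] at hmem
      refine ⟨?_, hmem⟩
      rw [mem_box]
      intro d
      have h1 : |((j - i) d : ℝ)| ^ p ≤ ∑ d', |((j - i) d' : ℝ)| ^ p := by
        apply Finset.single_le_sum (f := fun d' => |((j - i) d' : ℝ)| ^ p) _ (Finset.mem_univ d)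
        intro d' _
        positivity
      have h2 : |((j - i) d : ℝ)| ^ p < (w : ℝ) ^ p := lt_of_le_of_lt h1 hmem
      have h3 : |((j - i) d : ℝ)| < (w : ℝ) := by
        by_contra hcon
        push_neg at hcon
        have := Real.rpow_le_rpow (by positivity) hcon (by linarith : (0:ℝ) ≤ p)
        linarith
      have h4 : ((|(j - i) d| : ℤ) : ℝ) < (w : ℝ) := by
        rw [Int.cast_abs]
        exact h3
      exact_mod_cast h4.le
  · rintro ⟨hbox, hmem⟩
    right
    rw [Set.mem_setOf_eq, hsum]
    exact hmem


lemma final_package (hN : 1 ≤ N) {w : ℕ} (hw : 1 ≤ w) (S : Finset (V N)) (hS : IsDS S)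
    (h0 : (0 : V N) ∈ S) (hSbox : S ⊆ box N w) (𝔑 : V N → Set (V N))
    (hn : ∀ i j : V N, j ∈ 𝔑 i ↔ j - i ∈ S) :
    ∃ A : Set (V N), A.Nonempty ∧ IsConn N A ∧ IsStableConf N 𝔑 A ∧
      ∀ i ∈ A, ∀ j ∈ A, ∀ d : Fin N,
        ((|i d - j d| : ℤ) : ℝ) ≤ ((2*N*3^(N+1) : ℕ) : ℝ) * (w : ℝ)^(N+1) := by
  obtain ⟨B, hBne, h0B, hBbox, hBDS, hBst⟩ := main_abstract hN hw S hS h0 hSbox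
  refine ⟨↑B, Finset.coe_nonempty.mpr hBne, isConn_of_isDS hBDS,
    isStableConf_of_stableF hBst 𝔑 hn, ?_⟩
  intro i hi j hj d
  rw [Finset.mem_coe] at hi hj
  set r := N * (2*w+1)^(N+1) with hr
  have hid : |i d| ≤ (r : ℤ) := mem_box.mp (hBbox hi) d
  have hjd : |j d| ≤ (r : ℤ) := mem_box.mp (hBbox hj) d
  have h1 : |i d - j d| ≤ (2 * r : ℕ) := by
    have := abs_add_le (i d) (-(j d))
    rw [abs_neg] at this
    have h2 : i d - j d = i d + -(j d) := by ring
    rw [h2]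
    calc |i d + -j d| ≤ |i d| + |j d| := this
      _ ≤ ((2 * r : ℕ) : ℤ) := by push_cast; omega
  have h3 : (2 * r : ℕ) ≤ 2*N*3^(N+1) * w^(N+1) := by
    have h4 : (2*w+1)^(N+1) ≤ (3*w)^(N+1) := Nat.pow_le_pow_left (by omega) _
    have h5 : (3*w)^(N+1) = 3^(N+1) * w^(N+1) := mul_pow 3 w (N+1)
    calc 2 * r = 2 * N * (2*w+1)^(N+1) := by rw [hr]; ring
      _ ≤ 2 * N * (3^(N+1) * w^(N+1)) := by
          apply Nat.mul_le_mul_left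
          omega
      _ = 2*N*3^(N+1) * w^(N+1) := by ring
  have h6 : ((|i d - j d| : ℤ) : ℝ) ≤ ((2 * r : ℕ) : ℝ) := by exact_mod_cast h1
  have h7 : ((2 * r : ℕ) : ℝ) ≤ ((2*N*3^(N+1) * w^(N+1) : ℕ) : ℝ) := by exact_mod_cast h3
  have h8 : ((2*N*3^(N+1) * w^(N+1) : ℕ) : ℝ) = ((2*N*3^(N+1) : ℕ) : ℝ) * (w : ℝ)^(N+1) := by
    push_cast
    ring
  linarith

end Schelling

/-- Upper bound for the smallest stable shape: for the Schelling model on `ℤ^N` (`N > 1`) with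
`ℓ^p`-ball neighborhoods of radius `w` (any `p ∈ [1,∞]`), there exists a nonempty connected
stable shape of diameter at most `C_N w^{N+1}`. -/
theorem stmt13 (N : ℕ) (hN : 1 < N) :
    ∃ C : ℝ, 0 < C ∧ ∀ w : ℕ, 1 ≤ w →
      (∀ p : ℝ, 1 ≤ p → ∃ A : Set (Fin N → ℤ), A.Nonempty ∧
        IsConn N A ∧ IsStableConf N (nbhdLp N p w) A ∧
        ∀ i ∈ A, ∀ j ∈ A, ∀ d : Fin N,
          ((|i d - j d| : ℤ) : ℝ) ≤ C * (w : ℝ) ^ (N + 1)) ∧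
      (∃ A : Set (Fin N → ℤ), A.Nonempty ∧
        IsConn N A ∧ IsStableConf N (nbhdLinf N w) A ∧
        ∀ i ∈ A, ∀ j ∈ A, ∀ d : Fin N,
          ((|i d - j d| : ℤ) : ℝ) ≤ C * (w : ℝ) ^ (N + 1)) := by
  classical
  have hN1 : 1 ≤ N := by omega
  refine ⟨((2*N*3^(N+1) : ℕ) : ℝ), ?_, ?_⟩
  · have h1 : 0 < 2*N*3^(N+1) := by
      have h2 : 0 < 3^(N+1) := Nat.pow_pos (by omega)
      have h3 : 0 < 2*N := by omega
      exact Nat.mul_pos h3 h2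
    exact_mod_cast h1
  · intro w hw
    constructor
    · intro p hp
      exact Schelling.final_package hN1 hw (Schelling.SLp N p w) (Schelling.SLp_isDS hp)
        (Schelling.SLp_zero_mem hp hw) Schelling.SLp_subset _
        (fun i j => Schelling.mem_nbhdLp_iff hp hw i j)
    · refine Schelling.final_package hN1 hw (Schelling.box N (w-1)) (Schelling.box_isDS _)
        ?_ ?_ _ (fun i j => Schelling.mem_nbhdLinf_iff hw i j)
      · rw [Schelling.mem_box]
        intro d
        simp
      · intro x hx
        rw [Schelling.mem_box] at hx ⊢
        intro d
        calc |x d| ≤ ((w - 1 : ℕ) : ℤ) := hx d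
          _ ≤ (w : ℤ) := by push_cast; omega
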